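/- In a perfect REL-algebra, if a is an atom with a;1' ≠ 0, then there exists a unique atom e such that e ≤ 1' and a;e = a. -/

import Mathlib

class PerfectREL (α : Type*) [CompleteBooleanAlgebra α] [IsAtomic α] where
  comp : α → α → α
  conv : α → α
  id' : α
  ax2 : ∀ x y : α, conv (x ⊓ conv y) = conv x ⊓ y
  ax3l : ∀ x y z : α, comp (x ⊔ y) z = comp x z ⊔ comp y z
  ax3r : ∀ x y z : α, comp x (y ⊔ z) = comp x y ⊔ comp x z
  ax4l : comp (⊤ : α) ⊥ = ⊥
  ax4r : comp (⊥ : α) ⊤ = ⊥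
  ax5l : ∀ x y z : α, comp (conv x) y ⊓ z = comp (conv x) (y ⊓ comp (conv (conv x)) z) ⊓ z
  ax5r : ∀ x y z : α, comp x (conv y) ⊓ z = comp (x ⊓ comp z (conv (conv y))) (conv y) ⊓ z
  ax6l : ∀ x : α, comp id' x ≤ x
  ax6r : ∀ x : α, comp x id' ≤ x
  ax7 : comp (id' : α) id' = id'
  ax8 : comp ((conv (⊤ : α))ᶜ) ((conv (⊤ : α))ᶜ) ⊓ id' = ⊥
  ax9a : ∀ x y z : α, comp (comp (x ⊓ id') y) z = comp (x ⊓ id') (comp y z)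
  ax9b : ∀ x y z : α, comp (comp x (y ⊓ id')) z = comp x (comp (y ⊓ id') z)
  ax9c : ∀ x y z : α, comp (comp x y) (z ⊓ id') = comp x (comp y (z ⊓ id'))
  conv_sSup : ∀ S : Set α, conv (sSup S) = ⨆ x ∈ S, conv x
  comp_sSup_left : ∀ (S : Set α) (y : α), comp (sSup S) y = ⨆ x ∈ S, comp x y
  comp_sSup_right : ∀ (x : α) (S : Set α), comp x (sSup S) = ⨆ y ∈ S, comp x y

open PerfectREL

variable {α : Type*} [CompleteBooleanAlgebra α] [IsAtomic α] [PerfectREL α]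

-- atomistic property for complete atomic Boolean algebras
lemma sSup_atoms_le_eq' {β : Type*} [CompleteBooleanAlgebra β] [IsAtomic β] (b : β) :
    sSup {e : β | IsAtom e ∧ e ≤ b} = b := by
  set s := sSup {e : β | IsAtom e ∧ e ≤ b} with hs
  have hle : s ≤ b := sSup_le fun c hc => hc.2
  by_contra hne
  have hlt : s < b := lt_of_le_of_ne hle hne
  have hbs : b ⊓ sᶜ ≠ ⊥ := by
    intro h0
    have : b ≤ s := by
      calc b = b ⊓ sᶜ ⊔ b ⊓ s := by rw [sup_comm, ← inf_sup_left, sup_compl_eq_top, inf_top_eq]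
        _ ≤ ⊥ ⊔ s := sup_le_sup (le_of_eq h0) inf_le_right
        _ = s := bot_sup_eq s
    exact hne (le_antisymm hle this)
  rcases (IsAtomic.eq_bot_or_exists_atom_le (b ⊓ sᶜ)).resolve_left hbs with ⟨e, he, hle'⟩
  have hes : e ≤ s := le_sSup ⟨he, hle'.trans inf_le_left⟩
  have hec : e ≤ sᶜ := hle'.trans inf_le_right
  exact he.1 (le_bot_iff.mp (le_inf hes hec |>.trans (by simp)))

lemma comp_bot_right (x : α) : comp x (⊥ : α) = ⊥ := by
  have := comp_sSup_right x (∅ : Set α)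
  simpa using this

lemma comp_mono_left {x y : α} (z : α) (h : x ≤ y) : comp x z ≤ comp y z := by
  have := ax3l x y z
  rw [sup_eq_right.mpr h] at this
  exact this ▸ le_sup_left

lemma comp_mono_right (x : α) {y z : α} (h : y ≤ z) : comp x y ≤ comp x z := by
  have := ax3r x y z
  rw [sup_eq_right.mpr h] at this
  exact this ▸ le_sup_left

theorem exists_unique_E (a : α) (ha : IsAtom a) (h : comp a id' ≠ (⊥ : α)) :
    ∃! e : α, IsAtom e ∧ e ≤ id' ∧ comp a e = a := by
  -- a ; 1' = a
  have hid : comp a (id' : α) = a :=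
    ((ha.le_iff.mp (ax6r a)).resolve_left h)
  -- decompose id' into atoms
  have hdecomp : comp a (id' : α) = ⨆ e ∈ {e : α | IsAtom e ∧ e ≤ id'}, comp a e := by
    conv_lhs => rw [← sSup_atoms_le_eq' (id' : α)]
    exact comp_sSup_right a _
  have hne : ∃ e ∈ {e : α | IsAtom e ∧ e ≤ id'}, comp a e ≠ ⊥ := by
    by_contra hc
    push_neg at hc
    apply h
    rw [hdecomp]
    exact le_bot_iff.mp (iSup₂_le fun e he => le_of_eq (hc e he))
  obtain ⟨e, ⟨heA, heI⟩, hene⟩ := hne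
  have hae : comp a e = a :=
    (ha.le_iff.mp ((comp_mono_right a heI).trans (ax6r a))).resolve_left hene
  refine ⟨e, ⟨heA, heI, hae⟩, ?_⟩
  rintro f ⟨hfA, hfI, haf⟩
  -- uniqueness: a;(f;e) = (a;f);e = a;e = a ≠ ⊥, so f;e ≠ ⊥, and f;e ≤ f ⊓ e
  have hee : e ⊓ id' = e := inf_eq_left.mpr heI
  have key : comp a (comp f e) = a := by
    have := ax9c a f e
    rw [hee] at this
    rw [← this, haf, hae]
  have hfe : comp f e ≠ ⊥ := by
    intro h0
    rw [h0, comp_bot_right] at key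
    exact ha.1 key.symm
  have h1 : comp f e ≤ f := by
    have := comp_mono_right f heI
    exact this.trans (ax6r f)
  have h2 : comp f e ≤ e := by
    have := comp_mono_left e hfI
    exact this.trans (ax6l e)
  -- two atoms with nonbot meet are equal
  have hmeet : f ⊓ e ≠ ⊥ := fun h0 => hfe (le_bot_iff.mp (h0 ▸ le_inf h1 h2))
  by_contra hne'
  exact hmeet (hfA.disjoint_of_ne heA hne').eq_bot
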